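/- arXiv:2411.19879 — 3 statements merged into one kernel-verified Lean document; each statement's English description precedes it below -/
import Mathlib

section
/- Let G be a simple mixed graph on n vertices with integrated adjacency matrix 𝓘(G). Then (1/2)(δ₁(G)+δ₂(G)) ≤ λ₁(𝓘(G)) ≤ max{Δ₁(G), Δ₂(G)}, where δᵢ, Δᵢ are the minimum and maximum of d(u)+d⁺(u) (i=1) and d(u)+d⁻(u) (i=2) over vertices u, and λ₁ denotes the largest eigenvalue. -/
open Matrix Polynomial

lemma eval_charpoly' {m : Type*} [Fintype m] [DecidableEq m] (M : Matrix m m ℝ) (t : ℝ) :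
    (M.charpoly).eval t = (Matrix.diagonal (fun _ => t) - M).det := by
  rw [Matrix.charpoly, ← coe_evalRingHom, RingHom.map_det]
  congr 1
  ext i j
  by_cases h : i = j <;> simp [Matrix.charmatrix_apply, Matrix.map_apply, h, Matrix.diagonal,
    Matrix.one_apply]

lemma root_iff_eigen {m : Type*} [Fintype m] [DecidableEq m] (M : Matrix m m ℝ) (t : ℝ)
    (h : (M.charpoly).eval t = 0) : ∃ v ≠ 0, M *ᵥ v = t • v := by
  rw [eval_charpoly'] at h
  obtain ⟨v, hv0, hv⟩ := (Matrix.exists_mulVec_eq_zero_iff).2 h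
  refine ⟨v, hv0, ?_⟩
  have := hv
  rw [Matrix.sub_mulVec, sub_eq_zero] at this
  simp [Matrix.mulVec_diagonal] at this
  exact this.symm

lemma rayleigh_aux {m : Type*} [Fintype m] [DecidableEq m] (M U : Matrix m m ℝ) (e : m → ℝ)
    (hUs : U * star U = 1) (hsp : M = U * Matrix.diagonal e * star U)
    (c : ℝ) (hc : ∀ i, e i ≤ c) (x : m → ℝ) :
    x ⬝ᵥ (M *ᵥ x) ≤ c * (x ⬝ᵥ x) := by
  set w := x ᵥ* U with hw
  have h2 : star U *ᵥ x = w := by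
    rw [Matrix.star_eq_conjTranspose, Matrix.conjTranspose_eq_transpose_of_trivial,
      Matrix.mulVec_transpose]
  have h1 : x ⬝ᵥ (M *ᵥ x) = w ⬝ᵥ (Matrix.diagonal e *ᵥ w) := by
    rw [hsp, ← Matrix.mulVec_mulVec, ← Matrix.mulVec_mulVec, Matrix.dotProduct_mulVec, h2]
  have h3 : w ⬝ᵥ w = x ⬝ᵥ x := by
    have : w ⬝ᵥ (star U *ᵥ x) = x ⬝ᵥ x := by
      rw [Matrix.dotProduct_mulVec, hw, Matrix.vecMul_vecMul, hUs, Matrix.vecMul_one]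
    rw [← this, h2]
  rw [h1, ← h3]
  have : w ⬝ᵥ (Matrix.diagonal e *ᵥ w) = ∑ i, e i * (w i * w i) := by
    simp only [dotProduct, Matrix.mulVec_diagonal]
    exact Finset.sum_congr rfl fun i _ => by ring
  rw [this, dotProduct, Finset.mul_sum]
  exact Finset.sum_le_sum fun i _ =>
    mul_le_mul_of_nonneg_right (hc i) (mul_self_nonneg (w i)) |>.trans (le_of_eq rfl)

lemma rayleigh_bound {m : Type*} [Fintype m] [DecidableEq m] {M : Matrix m m ℝ}
    (hM : M.IsHermitian) (c : ℝ) (hc : ∀ i, hM.eigenvalues i ≤ c) (x : m → ℝ) :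
    x ⬝ᵥ (M *ᵥ x) ≤ c * (x ⬝ᵥ x) := by
  refine rayleigh_aux M (hM.eigenvectorUnitary : Matrix m m ℝ) hM.eigenvalues
    ((Matrix.mem_unitaryGroup_iff).mp hM.eigenvectorUnitary.2) ?_ c hc x
  have := hM.spectral_theorem
  simpa using this

/-- For a simple mixed graph `G` on `n ≥ 1` vertices with integrated adjacency matrix
`[[A, B], [Bᵀ, A]]` and largest eigenvalue `λ₁`, one has
`(δ₁(G) + δ₂(G)) / 2 ≤ λ₁ ≤ max{Δ₁(G), Δ₂(G)}`, where `δᵢ, Δᵢ` are the minimum and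
maximum over vertices `u` of `d(u) + d⁺(u)` (`i = 1`) and `d(u) + d⁻(u)` (`i = 2`). -/
theorem stmt14 {n : ℕ} (hn : 0 < n) (A B : Matrix (Fin n) (Fin n) ℝ)
    (hA : A.IsSymm) (hAdiag : ∀ i, A i i = 0) (hBdiag : ∀ i, B i i = 0)
    (hA01 : ∀ i j, A i j = 0 ∨ A i j = 1)
    (hB01 : ∀ i j, B i j = 0 ∨ B i j = 1)
    (δ₁ δ₂ Δ₁ Δ₂ : ℝ)
    (hδ₁ : IsLeast (Set.range fun u : Fin n => (∑ j, A u j) + ∑ j, B u j) δ₁)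
    (hδ₂ : IsLeast (Set.range fun u : Fin n => (∑ j, A u j) + ∑ j, B j u) δ₂)
    (hΔ₁ : IsGreatest (Set.range fun u : Fin n => (∑ j, A u j) + ∑ j, B u j) Δ₁)
    (hΔ₂ : IsGreatest (Set.range fun u : Fin n => (∑ j, A u j) + ∑ j, B j u) Δ₂)
    (μ : Fin (2 * n) → ℝ) (hμa : Antitone μ)
    (hμ : (Matrix.fromBlocks A B Bᵀ A).charpoly = ∏ i, (X - C (μ i))) :
    (δ₁ + δ₂) / 2 ≤ μ ⟨0, by omega⟩ ∧ μ ⟨0, by omega⟩ ≤ max Δ₁ Δ₂ := by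
  set M := Matrix.fromBlocks A B Bᵀ A with hMdef
  set i0 : Fin (2 * n) := ⟨0, by omega⟩ with hi0
  have hM : M.IsHermitian := by
    show Mᴴ = M
    rw [Matrix.conjTranspose_eq_transpose_of_trivial, hMdef, Matrix.fromBlocks_transpose,
      Matrix.transpose_transpose, hA]
  have hroot : ∀ t : ℝ, (M.charpoly).eval t = 0 ↔ ∃ i, μ i = t := by
    intro t
    rw [hμ]
    simp only [eval_prod, eval_sub, eval_X, eval_C, Finset.prod_eq_zero_iff, sub_eq_zero]
    constructor
    · rintro ⟨i, -, h⟩; exact ⟨i, h.symm⟩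
    · rintro ⟨i, h⟩; exact ⟨i, Finset.mem_univ i, h.symm⟩
  have hmax : ∀ i, μ i ≤ μ i0 := fun i => hμa (by simp [hi0, Fin.le_def])
  have hdiag : ∀ k, M k k = 0 := by
    rintro (u | u) <;> simp [hMdef, Matrix.fromBlocks, hAdiag]
  have hnn : ∀ k j, 0 ≤ M k j := by
    rintro (u | u) (v | v) <;>
      simp only [hMdef, Matrix.fromBlocks_apply₁₁, Matrix.fromBlocks_apply₁₂,
        Matrix.fromBlocks_apply₂₁, Matrix.fromBlocks_apply₂₂, Matrix.transpose_apply] <;>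
      [rcases hA01 u v with h | h; rcases hB01 u v with h | h; rcases hB01 v u with h | h;
        rcases hA01 u v with h | h] <;> rw [h] <;> norm_num
  have hrowsum : ∀ k : Fin n ⊕ Fin n, ∑ j, M k j =
      Sum.elim (fun u => (∑ j, A u j) + ∑ j, B u j) (fun u => (∑ j, A u j) + ∑ j, B j u) k := by
    rintro (u | u) <;>
      simp only [Fintype.sum_sum_type, hMdef, Matrix.fromBlocks_apply₁₁,
        Matrix.fromBlocks_apply₁₂, Matrix.fromBlocks_apply₂₁, Matrix.fromBlocks_apply₂₂,
        Matrix.transpose_apply, Sum.elim_inl, Sum.elim_inr]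
    ring
  -- upper bound
  have hub : μ i0 ≤ max Δ₁ Δ₂ := by
    obtain ⟨v, hv0, hv⟩ := root_iff_eigen M (μ i0) ((hroot _).2 ⟨i0, rfl⟩)
    have hev : Module.End.HasEigenvalue (Matrix.toLin' M) (μ i0) :=
      Module.End.hasEigenvalue_of_hasEigenvector
        ⟨Module.End.mem_eigenspace_iff.2 (by rw [Matrix.toLin'_apply, hv]), hv0⟩
    obtain ⟨k, hk⟩ := eigenvalue_mem_ball hev
    rw [Metric.mem_closedBall, Real.dist_eq] at hk
    have hsum : ∑ j ∈ Finset.univ.erase k, ‖M k j‖ = ∑ j, M k j := by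
      have : ∀ j, ‖M k j‖ = M k j := fun j => Real.norm_of_nonneg (hnn k j)
      simp_rw [this]
      rw [Finset.sum_erase_eq_sub (Finset.mem_univ k), hdiag k, sub_zero]
    have h1 : μ i0 ≤ ∑ j, M k j := by
      have := le_of_abs_le hk
      rw [hsum] at this
      have h2 := hdiag k
      linarith [this]
    refine h1.trans ?_
    rw [hrowsum k]
    rcases k with u | u
    · exact le_max_of_le_left (hΔ₁.2 ⟨u, rfl⟩)
    · exact le_max_of_le_right (hΔ₂.2 ⟨u, rfl⟩)
  refine ⟨?_, hub⟩
  -- lower bound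
  have hermle : ∀ i, hM.eigenvalues i ≤ μ i0 := by
    intro i
    have hsp := hM.eigenvalues_mem_spectrum_real i
    rw [spectrum.mem_iff] at hsp
    have hdet : (Matrix.diagonal (fun _ => hM.eigenvalues i) - M).det = 0 := by
      by_contra h
      apply hsp
      have : algebraMap ℝ (Matrix (Fin n ⊕ Fin n) (Fin n ⊕ Fin n) ℝ) (hM.eigenvalues i) =
          Matrix.diagonal (fun _ => hM.eigenvalues i) := by
        ext a b
        simp [Matrix.algebraMap_matrix_apply, Matrix.diagonal]
      rw [this]
      exact (Matrix.isUnit_iff_isUnit_det _).2 (Ne.isUnit h)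
    obtain ⟨j, hj⟩ := (hroot _).1 (by rw [eval_charpoly']; exact hdet)
    rw [← hj]
    exact hmax j
  have hray := rayleigh_bound hM (μ i0) hermle (fun _ => 1)
  have hdp1 : (fun _ : Fin n ⊕ Fin n => (1 : ℝ)) ⬝ᵥ (fun _ => 1) = (n : ℝ) + n := by
    simp [dotProduct]
  have hdpM : (fun _ : Fin n ⊕ Fin n => (1 : ℝ)) ⬝ᵥ (M *ᵥ fun _ => 1) = ∑ k, ∑ j, M k j := by
    simp [dotProduct, Matrix.mulVec]
  have hlow : (n : ℝ) * δ₁ + n * δ₂ ≤ ∑ k, ∑ j, M k j := by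
    have : ∑ k, ∑ j, M k j = (∑ u, ((∑ j, A u j) + ∑ j, B u j)) +
        ∑ u, ((∑ j, A u j) + ∑ j, B j u) := by
      rw [Fintype.sum_sum_type]
      congr 1 <;> exact Finset.sum_congr rfl fun u _ => by rw [hrowsum] <;> simp
    rw [this]
    have h1 : (n : ℝ) * δ₁ ≤ ∑ u, ((∑ j, A u j) + ∑ j, B u j) := by
      calc (n : ℝ) * δ₁ = ∑ _u : Fin n, δ₁ := by simp
        _ ≤ _ := Finset.sum_le_sum fun u _ => hδ₁.2 ⟨u, rfl⟩
    have h2 : (n : ℝ) * δ₂ ≤ ∑ u, ((∑ j, A u j) + ∑ j, B j u) := by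
      calc (n : ℝ) * δ₂ = ∑ _u : Fin n, δ₂ := by simp
        _ ≤ _ := Finset.sum_le_sum fun u _ => hδ₂.2 ⟨u, rfl⟩
    linarith
  rw [hdpM, hdp1] at hray
  have hn' : (0 : ℝ) < n := by exact_mod_cast hn
  nlinarith [hray, hlow]
end

section
/- Let G be a simple mixed graph on n vertices and let n⁺ and n⁻ be the numbers of positive and negative eigenvalues (with multiplicity) of the integrated adjacency matrix 𝓘(G). Then the independence number of G satisfies α(G) ≤ min{(2n−n⁺)/2, (2n−n⁻)/2}. -/
open Matrix

lemma mulVec_sum' {ι κ : Type*} [Fintype ι] (M : Matrix ι ι ℝ) (s : Finset κ)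
    (f : κ → ι → ℝ) : M *ᵥ (∑ i ∈ s, f i) = ∑ i ∈ s, M *ᵥ f i := by
  exact map_sum M.mulVecLin f s

lemma dp_sum_left {ι κ : Type*} [Fintype ι] (s : Finset κ) (f : κ → ι → ℝ) (y : ι → ℝ) :
    (∑ i ∈ s, f i) ⬝ᵥ y = ∑ i ∈ s, f i ⬝ᵥ y := by
  simp only [dotProduct, Finset.sum_apply, Finset.sum_mul]
  exact Finset.sum_comm

lemma dp_sum_right {ι κ : Type*} [Fintype ι] (s : Finset κ) (x : ι → ℝ) (f : κ → ι → ℝ) :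
    x ⬝ᵥ (∑ i ∈ s, f i) = ∑ i ∈ s, x ⬝ᵥ f i := by
  simp only [dotProduct, Finset.sum_apply, Finset.mul_sum]
  exact Finset.sum_comm

lemma key {ι : Type*} [Fintype ι] [DecidableEq ι] {M : Matrix ι ι ℝ} (hM : M.IsHermitian)
    (T : Finset ι) (hT : ∀ a ∈ T, ∀ b ∈ T, M a b = 0) (σ : ℝ) (hσ : σ = 1 ∨ σ = -1) :
    Nat.card {i : ι // 0 < σ * hM.eigenvalues i} + T.card ≤ Fintype.card ι := by
  classical
  set P : Finset ι := Finset.univ.filter (fun i => 0 < σ * hM.eigenvalues i) with hP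
  let V : Submodule ℝ (EuclideanSpace ℝ ι) :=
    Submodule.span ℝ (Set.range (⇑hM.eigenvectorBasis ∘ (Subtype.val : P → ι)))
  let W : Submodule ℝ (EuclideanSpace ℝ ι) :=
    Submodule.span ℝ (Set.range (⇑(EuclideanSpace.basisFun ι ℝ) ∘ (Subtype.val : T → ι)))
  have hVrank : Module.finrank ℝ V = P.card := by
    rw [finrank_span_eq_card (hM.eigenvectorBasis.orthonormal.linearIndependent.comp
      (Subtype.val : P → ι) Subtype.val_injective)]
    simp [Fintype.card_coe]
  have hWrank : Module.finrank ℝ W = T.card := by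
    rw [finrank_span_eq_card ((EuclideanSpace.basisFun ι ℝ).orthonormal.linearIndependent.comp
      (Subtype.val : T → ι) Subtype.val_injective)]
    simp [Fintype.card_coe]
  have hWsupp : ∀ x ∈ W, ∀ a, a ∉ T → (x : ι → ℝ) a = 0 := by
    intro x hx a ha
    induction hx using Submodule.span_induction with
    | mem y hy =>
        obtain ⟨c, rfl⟩ := hy
        have hne : a ≠ (c : ι) := fun h => ha (h ▸ c.2)
        simp [EuclideanSpace.basisFun_apply, EuclideanSpace.single_apply, hne]
    | zero => simp
    | add y z _ _ hy hz =>
        show (y : ι → ℝ) a + (z : ι → ℝ) a = 0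
        rw [hy, hz, add_zero]
    | smul r y _ hy =>
        show r * (y : ι → ℝ) a = 0
        rw [hy, mul_zero]
  have hWq : ∀ x ∈ W, (x : ι → ℝ) ⬝ᵥ (M *ᵥ (x : ι → ℝ)) = 0 := by
    intro x hx
    apply Finset.sum_eq_zero
    intro a _
    by_cases haT : a ∈ T
    · have h1 : (M *ᵥ (x : ι → ℝ)) a = ∑ c, M a c * x c := rfl
      have h2 : (∑ c, M a c * (x : ι → ℝ) c) = 0 := by
        apply Finset.sum_eq_zero
        intro c _
        by_cases hcT : c ∈ T
        · rw [hT a haT c hcT, zero_mul]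
        · rw [hWsupp x hx c hcT, mul_zero]
      rw [h1, h2, mul_zero]
    · rw [hWsupp x hx a haT, zero_mul]
  have hVq : ∀ x ∈ V, x ≠ 0 → 0 < σ * ((x : ι → ℝ) ⬝ᵥ (M *ᵥ (x : ι → ℝ))) := by
    intro x hx hx0
    rw [Submodule.mem_span_range_iff_exists_fun ℝ] at hx
    obtain ⟨c, hc⟩ := hx
    set v : ι → (ι → ℝ) := fun i => ⇑(hM.eigenvectorBasis i) with hv
    have hdot : ∀ i j : ι, v i ⬝ᵥ v j = if i = j then 1 else 0 := by
      intro i j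
      have horth := hM.eigenvectorBasis.orthonormal
      rw [orthonormal_iff_ite] at horth
      have h2 := horth i j
      rw [← h2]
      simp [hv, PiLp.inner_apply, dotProduct, mul_comm]
    have hMv : ∀ j, M *ᵥ v j = hM.eigenvalues j • v j := fun j =>
      hM.mulVec_eigenvectorBasis j
    have hxfun : (x : ι → ℝ) = ∑ i : P, c i • v ↑i := by
      have := hc
      rw [← this, WithLp.ofLp_sum]; rfl
    have hMx : M *ᵥ (x : ι → ℝ) = ∑ i : P, (c i * hM.eigenvalues ↑i) • v ↑i := by
      rw [hxfun, mulVec_sum']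
      apply Finset.sum_congr rfl
      intro i _
      rw [mulVec_smul, hMv, smul_smul]
    have hq : (x : ι → ℝ) ⬝ᵥ (M *ᵥ (x : ι → ℝ)) = ∑ i : P, hM.eigenvalues ↑i * (c i)^2 := by
      rw [hMx, hxfun, dp_sum_right]
      apply Finset.sum_congr rfl
      intro i _
      rw [dp_sum_left, Finset.sum_eq_single i]
      · rw [smul_dotProduct, dotProduct_smul, hdot i i, if_pos rfl]
        simp [smul_eq_mul]; ring
      · intro j _ hji
        rw [smul_dotProduct, dotProduct_smul, hdot (j : ι) i,
          if_neg (fun h => hji (Subtype.ext h))]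
        simp [smul_eq_mul]
      · simp
    have hex : ∃ i : P, c i ≠ 0 := by
      by_contra h
      push_neg at h
      apply hx0
      have hz : (x : EuclideanSpace ℝ ι) = 0 := by
        rw [← hc]
        apply Finset.sum_eq_zero
        intro i _
        rw [h i, zero_smul]
      exact hz
    obtain ⟨i0, hi0⟩ := hex
    rw [hq, Finset.mul_sum]
    apply Finset.sum_pos'
    · intro i _
      have hi : 0 < σ * hM.eigenvalues ↑i := (Finset.mem_filter.mp i.2).2
      nlinarith [sq_nonneg (c i)]
    · refine ⟨i0, Finset.mem_univ _, ?_⟩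
      have hi : 0 < σ * hM.eigenvalues ↑i0 := (Finset.mem_filter.mp i0.2).2
      have hc2 : 0 < (c i0)^2 := by positivity
      nlinarith
  have hdisj : V ⊓ W = ⊥ := by
    rw [Submodule.eq_bot_iff]
    intro x hx
    by_contra hx0
    have h1 := hVq x hx.1 hx0
    rw [hWq x hx.2] at h1
    simp at h1
  have hsum := Submodule.finrank_sup_add_finrank_inf_eq V W
  rw [hdisj] at hsum
  simp only [finrank_bot, add_zero] at hsum
  have hle : Module.finrank ℝ ↥(V ⊔ W) ≤ Fintype.card ι := by
    have h := Submodule.finrank_le (V ⊔ W)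
    rwa [finrank_euclideanSpace] at h
  have hcard : Nat.card {i : ι // 0 < σ * hM.eigenvalues i} = P.card := by
    rw [Nat.card_eq_fintype_card]
    simp [hP, Fintype.card_subtype]
  omega

/-- For a simple mixed graph `G` on `n` vertices, let `n⁺` and `n⁻` be the numbers of
positive and negative eigenvalues (with multiplicity) of `𝓘(G) = [[A, B], [Bᵀ, A]]`.
Then every independent set `S` of `G` (no two vertices joined by an edge or an arc)
satisfies `|S| ≤ min{(2n − n⁺)/2, (2n − n⁻)/2}`; hence this bounds the independence
number `α(G)`. -/
theorem stmt18 {n : ℕ} (A B : Matrix (Fin n) (Fin n) ℝ)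
    (hA : A.IsSymm) (hAdiag : ∀ i, A i i = 0) (hBdiag : ∀ i, B i i = 0)
    (hA01 : ∀ i j, A i j = 0 ∨ A i j = 1)
    (hB01 : ∀ i j, B i j = 0 ∨ B i j = 1)
    (hM : (Matrix.fromBlocks A B Bᵀ A).IsHermitian)
    (S : Finset (Fin n))
    (hS : ∀ i ∈ S, ∀ j ∈ S, A i j = 0 ∧ B i j = 0) :
    (S.card : ℝ) ≤
      min ((2 * (n : ℝ) - Nat.card {i : Fin n ⊕ Fin n // 0 < hM.eigenvalues i}) / 2)
        ((2 * (n : ℝ) - Nat.card {i : Fin n ⊕ Fin n // hM.eigenvalues i < 0}) / 2) := by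
  classical
  set T : Finset (Fin n ⊕ Fin n) := S.image Sum.inl ∪ S.image Sum.inr with hTdef
  have hTcard : T.card = 2 * S.card := by
    rw [hTdef, Finset.card_union_of_disjoint, Finset.card_image_of_injective _ Sum.inl_injective,
      Finset.card_image_of_injective _ Sum.inr_injective]
    · ring
    · simp [Finset.disjoint_left]
  have hT : ∀ a ∈ T, ∀ b ∈ T, (Matrix.fromBlocks A B Bᵀ A) a b = 0 := by
    intro a ha b hb
    rw [hTdef] at ha hb
    simp only [Finset.mem_union, Finset.mem_image] at ha hb
    rcases ha with ⟨i, hi, rfl⟩ | ⟨i, hi, rfl⟩ <;>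
      rcases hb with ⟨j, hj, rfl⟩ | ⟨j, hj, rfl⟩
    · exact (hS i hi j hj).1
    · exact (hS i hi j hj).2
    · exact (hS j hj i hi).2
    · exact (hS i hi j hj).1
  have hcardι : Fintype.card (Fin n ⊕ Fin n) = 2 * n := by simp; ring
  have h1 := key hM T hT 1 (Or.inl rfl)
  have h2 := key hM T hT (-1) (Or.inr rfl)
  rw [hcardι, hTcard] at h1 h2
  have e1 : Nat.card {i : Fin n ⊕ Fin n // 0 < 1 * hM.eigenvalues i}
      = Nat.card {i : Fin n ⊕ Fin n // 0 < hM.eigenvalues i} :=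
    Nat.card_congr (Equiv.subtypeEquivRight fun i => by rw [one_mul])
  have e2 : Nat.card {i : Fin n ⊕ Fin n // 0 < -1 * hM.eigenvalues i}
      = Nat.card {i : Fin n ⊕ Fin n // hM.eigenvalues i < 0} :=
    Nat.card_congr (Equiv.subtypeEquivRight fun i => by constructor <;> intro h <;> linarith)
  rw [e1] at h1
  rw [e2] at h2
  have h1' : (Nat.card {i : Fin n ⊕ Fin n // 0 < hM.eigenvalues i} : ℝ) + 2 * S.card ≤ 2 * n := by
    exact_mod_cast h1
  have h2' : (Nat.card {i : Fin n ⊕ Fin n // hM.eigenvalues i < 0} : ℝ) + 2 * S.card ≤ 2 * n := by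
    exact_mod_cast h2
  apply le_min <;> [linarith; linarith]
end

section
/- Let G be a simple mixed graph whose integrated adjacency matrix 𝓘(G) has eigenvalues in nonincreasing order, and suppose G contains a clique on k ≥ 1 vertices (a set of k vertices pairwise joined by an edge and arcs in both directions). Then k ≤ 1 + λ₁(𝓘(G))/2. -/
open Matrix Polynomial

section AuxClique

variable {m : Type*} [Fintype m] [DecidableEq m]

lemma my_eval_charpoly (M : Matrix m m ℝ) (t : ℝ) :
    M.charpoly.eval t = (Matrix.scalar m t - M).det := by
  rw [Matrix.charpoly, eval_det, matPolyEquiv_charmatrix]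
  simp

omit [Fintype m] [DecidableEq m] in
lemma my_star_eq (P : Matrix m m ℝ) : star P = Pᵀ := by
  ext i j; simp [Matrix.star_apply]

lemma my_rayleigh (M : Matrix m m ℝ) (hM : M.IsHermitian) (c : ℝ)
    (hc : ∀ t, t ∈ spectrum ℝ M → t ≤ c) (x : m → ℝ) :
    x ⬝ᵥ (M *ᵥ x) ≤ c * (x ⬝ᵥ x) := by
  have hd : ∀ i, hM.eigenvalues i ≤ c := fun i =>
    hc _ (hM.eigenvalues_mem_spectrum_real (𝕜 := ℝ) i)
  set U : Matrix m m ℝ := (hM.eigenvectorUnitary : Matrix m m ℝ) with hU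
  have hunit : U * star U = 1 := (Matrix.mem_unitaryGroup_iff).mp hM.eigenvectorUnitary.2
  set y : m → ℝ := Uᵀ *ᵥ x with hy
  have hdiag : RCLike.ofReal ∘ hM.eigenvalues = hM.eigenvalues := by
    ext i; simp
  have h1 : x ⬝ᵥ (M *ᵥ x) = y ⬝ᵥ (Matrix.diagonal hM.eigenvalues *ᵥ y) := by
    conv_lhs => rw [hM.spectral_theorem]
    rw [hdiag, Unitary.conjStarAlgAut_apply, my_star_eq, ← Matrix.mulVec_mulVec, ← Matrix.mulVec_mulVec,
      Matrix.dotProduct_mulVec x U, ← Matrix.mulVec_transpose, hy]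
  have h2 : y ⬝ᵥ y = x ⬝ᵥ x := by
    rw [hy, Matrix.dotProduct_mulVec (Uᵀ *ᵥ x) Uᵀ x, Matrix.vecMul_transpose,
      Matrix.mulVec_mulVec, ← my_star_eq, hunit, Matrix.one_mulVec]
  rw [h1, ← h2]
  simp only [dotProduct, Matrix.mulVec_diagonal]
  rw [Finset.mul_sum]
  apply Finset.sum_le_sum
  intro i _
  have : y i * (hM.eigenvalues i * y i) = hM.eigenvalues i * (y i * y i) := by ring
  rw [this]
  have h0 : 0 ≤ y i * y i := mul_self_nonneg _
  nlinarith [hd i]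

lemma my_clique_sum {k : ℕ} (S : Finset m) (hcard : S.card = k) (hk : 1 ≤ k)
    (C : Matrix m m ℝ) (hdiag : ∀ i, C i i = 0)
    (hone : ∀ i ∈ S, ∀ j ∈ S, i ≠ j → C i j = 1)
    (u : m → ℝ) (hu : u = fun i => if i ∈ S then (1 : ℝ) else 0) :
    u ⬝ᵥ (C *ᵥ u) = (k : ℝ) * ((k : ℝ) - 1) := by
  have key : ∀ t : m → ℝ, (∑ i, u i * t i) = ∑ i ∈ S, t i := by
    intro t
    rw [hu]
    simp only [ite_mul, one_mul, zero_mul]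
    rw [Finset.sum_ite_mem, Finset.univ_inter]
  simp only [dotProduct, Matrix.mulVec, dotProduct]
  rw [key]
  have inner : ∀ i ∈ S, (∑ j, C i j * u j) = (k : ℝ) - 1 := by
    intro i hi
    have : (∑ j, C i j * u j) = ∑ j, u j * C i j := by
      apply Finset.sum_congr rfl; intro j _; ring
    rw [this, key (fun j => C i j)]
    rw [← Finset.sum_erase_add S _ hi, hdiag, add_zero]
    rw [Finset.sum_congr rfl (fun j hj => hone i hi j (Finset.mem_of_mem_erase hj)
      (Ne.symm (Finset.ne_of_mem_erase hj)))]
    rw [Finset.sum_const, Finset.card_erase_of_mem hi, hcard, nsmul_eq_mul, mul_one]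
    rw [Nat.cast_sub hk, Nat.cast_one]
  rw [Finset.sum_congr rfl inner, Finset.sum_const, hcard, nsmul_eq_mul]

end AuxClique

/-- For a simple mixed graph `G` on `n ≥ 1` vertices containing a clique on `k ≥ 1`
vertices (pairwise joined by an edge and by arcs in both directions), the largest
eigenvalue `λ₁` of `𝓘(G) = [[A, B], [Bᵀ, A]]` satisfies `k ≤ 1 + λ₁/2`. -/
theorem stmt19 {n k : ℕ} (hn : 0 < n) (hk : 1 ≤ k)
    (A B : Matrix (Fin n) (Fin n) ℝ)
    (hA : A.IsSymm) (hAdiag : ∀ i, A i i = 0) (hBdiag : ∀ i, B i i = 0)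
    (hA01 : ∀ i j, A i j = 0 ∨ A i j = 1)
    (hB01 : ∀ i j, B i j = 0 ∨ B i j = 1)
    (S : Finset (Fin n)) (hcard : S.card = k)
    (hclique : ∀ i ∈ S, ∀ j ∈ S, i ≠ j → A i j = 1 ∧ B i j = 1)
    (μ : Fin (2 * n) → ℝ) (hμa : Antitone μ)
    (hμ : (Matrix.fromBlocks A B Bᵀ A).charpoly = ∏ i, (X - C (μ i))) :
    (k : ℝ) ≤ 1 + μ ⟨0, by omega⟩ / 2 := by
  set M := Matrix.fromBlocks A B Bᵀ A with hM
  set μ0 : ℝ := μ ⟨0, by omega⟩ with hμ0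
  have hherm : M.IsHermitian := by
    show Mᴴ = M
    rw [Matrix.conjTranspose_eq_transpose_of_trivial, hM, Matrix.fromBlocks_transpose,
      hA.eq, Matrix.transpose_transpose]
  -- every spectrum element is at most μ0
  have hspec : ∀ t, t ∈ spectrum ℝ M → t ≤ μ0 := by
    intro t ht
    rw [spectrum.mem_iff] at ht
    have hdet : (Matrix.scalar _ t - M).det = 0 := by
      by_contra h
      exact ht ((Matrix.isUnit_iff_isUnit_det _).mpr (isUnit_iff_ne_zero.mpr h))
    have heval : M.charpoly.eval t = 0 := by rw [my_eval_charpoly]; exact hdet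
    rw [hμ] at heval
    simp only [eval_prod, eval_sub, eval_X, eval_C] at heval
    obtain ⟨i, _, hi⟩ := Finset.prod_eq_zero_iff.mp heval
    have : t = μ i := by linarith [sub_eq_zero.mp hi]
    rw [this]
    exact hμa (by simp [Fin.le_def])
  -- test vector
  set u : Fin n → ℝ := fun i => if i ∈ S then (1 : ℝ) else 0 with hu
  set x : Fin n ⊕ Fin n → ℝ := Sum.elim u u with hx
  have hBT : ∀ i ∈ S, ∀ j ∈ S, i ≠ j → Bᵀ i j = 1 := by
    intro i hi j hj hij
    exact (hclique j hj i hi (Ne.symm hij)).2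
  have hAs : u ⬝ᵥ (A *ᵥ u) = (k : ℝ) * ((k : ℝ) - 1) :=
    my_clique_sum S hcard hk A hAdiag (fun i hi j hj hij => (hclique i hi j hj hij).1) u hu
  have hBs : u ⬝ᵥ (B *ᵥ u) = (k : ℝ) * ((k : ℝ) - 1) :=
    my_clique_sum S hcard hk B hBdiag (fun i hi j hj hij => (hclique i hi j hj hij).2) u hu
  have hBTs : u ⬝ᵥ (Bᵀ *ᵥ u) = (k : ℝ) * ((k : ℝ) - 1) :=
    my_clique_sum S hcard hk Bᵀ (fun i => hBdiag i) hBT u hu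
  have huu : u ⬝ᵥ u = (k : ℝ) := by
    rw [hu]
    simp only [dotProduct, ite_mul, one_mul, zero_mul]
    rw [Finset.sum_ite_mem, Finset.univ_inter]
    simp [hcard]
  have hray := my_rayleigh M hherm μ0 hspec x
  have hnum : x ⬝ᵥ (M *ᵥ x) = 4 * ((k : ℝ) * ((k : ℝ) - 1)) := by
    rw [hx, hM, Matrix.fromBlocks_mulVec, sumElim_dotProduct_sumElim,
      dotProduct_add, dotProduct_add, Sum.elim_comp_inl, Sum.elim_comp_inr,
      hAs, hBs, hBTs]
    ring
  have hden : x ⬝ᵥ x = 2 * (k : ℝ) := by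
    rw [hx, sumElim_dotProduct_sumElim, huu]; ring
  rw [hnum, hden] at hray
  have hkpos : (0 : ℝ) < k := by exact_mod_cast hk
  nlinarith [hray, hkpos]
end
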